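/- Let (X, ρ) be a rectangular quasi b-metric space with coefficient s ≥ 1 and let (xₙ) be a forward Cauchy sequence with pairwise distinct elements. If (xₙ) forward converges to x ∈ X (ρ(x, xₙ) → 0) and backward converges to y ∈ X (ρ(xₙ, y) → 0), then x = y. -/

import Mathlib

open Filter Topology

theorem rqb_forward_backward_limits_eq
    {X : Type*} (ρ : X → X → ℝ) (s : ℝ) (hs : 1 ≤ s)
    (hnonneg : ∀ x y, 0 ≤ ρ x y)
    (hzero : ∀ x y, ρ x y = 0 ↔ x = y)
    (hrect : ∀ x y u v : X, u ≠ v → u ≠ x → u ≠ y → v ≠ x → v ≠ y →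
      ρ x y ≤ s * (ρ x u + ρ u v + ρ v y))
    (xs : ℕ → X)
    (hinj : Function.Injective xs)
    (hcauchy : ∀ ε > (0:ℝ), ∃ N, ∀ n m, N ≤ n → n ≤ m → ρ (xs n) (xs m) < ε)
    (x y : X)
    (hfwd : Tendsto (fun n => ρ x (xs n)) atTop (𝓝 0))
    (hbwd : Tendsto (fun n => ρ (xs n) y) atTop (𝓝 0)) :
    x = y := by
  have hspos : (0:ℝ) < s := lt_of_lt_of_le one_pos hs
  -- eventually xs k ≠ x and xs k ≠ y
  have h1 : ∃ B, ∀ k ≥ B, xs k ≠ x := by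
    by_cases h : ∃ a, xs a = x
    · obtain ⟨a, ha⟩ := h
      exact ⟨a + 1, fun k hk he => by
        have : k = a := hinj (he.trans ha.symm)
        omega⟩
    · exact ⟨0, fun k _ he => h ⟨k, he⟩⟩
  have h2 : ∃ B, ∀ k ≥ B, xs k ≠ y := by
    by_cases h : ∃ a, xs a = y
    · obtain ⟨a, ha⟩ := h
      exact ⟨a + 1, fun k hk he => by
        have : k = a := hinj (he.trans ha.symm)
        omega⟩
    · exact ⟨0, fun k _ he => h ⟨k, he⟩⟩
  obtain ⟨B₁, hB₁⟩ := h1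
  obtain ⟨B₂, hB₂⟩ := h2
  have key : ∀ ε > (0:ℝ), ρ x y < ε := by
    intro ε hε
    have hδ : (0:ℝ) < ε / (4 * s) := by positivity
    obtain ⟨N₁, hN₁⟩ := hcauchy _ hδ
    obtain ⟨N₂, hN₂⟩ := eventually_atTop.mp (hfwd.eventually (gt_mem_nhds hδ))
    obtain ⟨N₃, hN₃⟩ := eventually_atTop.mp (hbwd.eventually (gt_mem_nhds hδ))
    set n := max (max N₁ N₂) (max N₃ (max B₁ B₂)) with hn
    have hn1 : N₁ ≤ n := le_trans (le_max_left _ _) (le_max_left _ _)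
    have hn2 : N₂ ≤ n := le_trans (le_max_right _ _) (le_max_left _ _)
    have hn3 : N₃ ≤ n := le_trans (le_max_left _ _) (le_max_right _ _)
    have hb1 : B₁ ≤ n := le_trans (le_trans (le_max_left _ _) (le_max_right _ _)) (le_max_right _ _)
    have hb2 : B₂ ≤ n := le_trans (le_trans (le_max_right _ _) (le_max_right _ _)) (le_max_right _ _)
    have huv : xs n ≠ xs (n+1) := fun h => by have := hinj h; omega
    have h3 := hrect x y (xs n) (xs (n+1)) huv (hB₁ n hb1) (hB₂ n hb2)
      (hB₁ (n+1) (by omega)) (hB₂ (n+1) (by omega))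
    have e1 : ρ x (xs n) < ε / (4*s) := hN₂ n hn2
    have e2 : ρ (xs n) (xs (n+1)) < ε / (4*s) := hN₁ n (n+1) hn1 (by omega)
    have e3 : ρ (xs (n+1)) y < ε / (4*s) := hN₃ (n+1) (by omega)
    have : ρ x y ≤ s * (ρ x (xs n) + ρ (xs n) (xs (n+1)) + ρ (xs (n+1)) y) := h3
    have hmul : s * (ρ x (xs n) + ρ (xs n) (xs (n+1)) + ρ (xs (n+1)) y) < s * (3 * (ε / (4*s))) := by
      apply mul_lt_mul_of_pos_left _ (lt_of_lt_of_le one_pos hs)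
      linarith
    have hcalc : s * (3 * (ε / (4*s))) = 3/4 * ε := by
      field_simp
    calc ρ x y ≤ _ := h3
      _ < s * (3 * (ε / (4*s))) := hmul
      _ = 3/4 * ε := hcalc
      _ < ε := by linarith
  by_contra hxy
  have hpos : 0 < ρ x y :=
    (hnonneg x y).lt_of_ne fun h => hxy ((hzero x y).mp h.symm)
  exact absurd (key _ hpos) (lt_irrefl _)
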